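/- Let θ : [0,T] → ℝ be a C² function and define w(t) := −θ″(t) + sin θ(t) cos θ(t). Define φ(t,x) := (cos θ(t) cos x, cos θ(t) sin x, sin θ(t)) and f(t,x) := w(t)·(−sin θ(t) cos x, −sin θ(t) sin x, cos θ(t)). Then φ takes values in S² and satisfies the controlled wave maps equation □φ = (|φ_t|² − |φ_x|²)φ + f, where moreover f(t,x) is orthogonal to φ(t,x) for all (t,x) (so f = f^{φ⊥}). -/

import Mathlib

open Real

/-- Partial derivative in time of a scalar field on `ℝ × S¹`. -/
noncomputable def dt (g : ℝ → ℝ → ℝ) (t x : ℝ) : ℝ := deriv (fun t' => g t' x) t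

/-- Partial derivative in space. -/
noncomputable def dx (g : ℝ → ℝ → ℝ) (t x : ℝ) : ℝ := deriv (fun x' => g t x') x

/-- d'Alembertian `□ = −∂_{tt} + ∂_{xx}`. -/
noncomputable def box (g : ℝ → ℝ → ℝ) (t x : ℝ) : ℝ := -(dt (dt g) t x) + dx (dx g) t x

/-- For `θ ∈ C²`, `w = −θ″ + sin θ cos θ`,
`φ(t,x) = (cos θ(t) cos x, cos θ(t) sin x, sin θ(t))` and
`f(t,x) = w(t)·(−sin θ(t) cos x, −sin θ(t) sin x, cos θ(t))`, the map `φ` is `S²`-valued,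
`f ⟂ φ` pointwise (so `f = f^{φ⊥}`), and `φ` solves `□φ = (|φ_t|² − |φ_x|²)φ + f`. -/
theorem stmt8 (θ w : ℝ → ℝ) (hθ : ContDiff ℝ 2 θ)
    (hw : ∀ t, w t = -(deriv (deriv θ) t) + Real.sin (θ t) * Real.cos (θ t))
    (φ1 φ2 φ3 f1 f2 f3 : ℝ → ℝ → ℝ)
    (hφ1 : ∀ t x, φ1 t x = Real.cos (θ t) * Real.cos x)
    (hφ2 : ∀ t x, φ2 t x = Real.cos (θ t) * Real.sin x)
    (hφ3 : ∀ t x, φ3 t x = Real.sin (θ t))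
    (hf1 : ∀ t x, f1 t x = w t * (-(Real.sin (θ t) * Real.cos x)))
    (hf2 : ∀ t x, f2 t x = w t * (-(Real.sin (θ t) * Real.sin x)))
    (hf3 : ∀ t x, f3 t x = w t * Real.cos (θ t)) :
    (∀ t x, (φ1 t x)^2 + (φ2 t x)^2 + (φ3 t x)^2 = 1) ∧
    (∀ t x, f1 t x * φ1 t x + f2 t x * φ2 t x + f3 t x * φ3 t x = 0) ∧
    (∀ t x,
      box φ1 t x =
        (((dt φ1 t x)^2 + (dt φ2 t x)^2 + (dt φ3 t x)^2) -
          ((dx φ1 t x)^2 + (dx φ2 t x)^2 + (dx φ3 t x)^2)) * φ1 t x + f1 t x ∧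
      box φ2 t x =
        (((dt φ1 t x)^2 + (dt φ2 t x)^2 + (dt φ3 t x)^2) -
          ((dx φ1 t x)^2 + (dx φ2 t x)^2 + (dx φ3 t x)^2)) * φ2 t x + f2 t x ∧
      box φ3 t x =
        (((dt φ1 t x)^2 + (dt φ2 t x)^2 + (dt φ3 t x)^2) -
          ((dx φ1 t x)^2 + (dx φ2 t x)^2 + (dx φ3 t x)^2)) * φ3 t x + f3 t x) := by
  have hθd : Differentiable ℝ θ := hθ.differentiable two_ne_zero
  have hθ'd : Differentiable ℝ (deriv θ) :=
    ((contDiff_succ_iff_deriv.mp (show ContDiff ℝ (1+1) θ by norm_num [hθ])).2.2).differentiable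
      one_ne_zero
  refine ⟨?_, ?_, ?_⟩
  · intro t x
    rw [hφ1, hφ2, hφ3]
    nlinarith [sin_sq_add_cos_sq (θ t), sin_sq_add_cos_sq x]
  · intro t x
    rw [hφ1, hφ2, hφ3, hf1, hf2, hf3]
    linear_combination (-(w t * Real.sin (θ t) * Real.cos (θ t))) * sin_sq_add_cos_sq x
  · intro t x
    -- time derivatives
    have h1t : ∀ t, HasDerivAt (fun t' => φ1 t' x)
        (-Real.sin (θ t) * deriv θ t * Real.cos x) t := by
      intro t
      simp only [hφ1]
      exact ((hθd t).hasDerivAt.cos).mul_const _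
    have h2t : ∀ t, HasDerivAt (fun t' => φ2 t' x)
        (-Real.sin (θ t) * deriv θ t * Real.sin x) t := by
      intro t
      simp only [hφ2]
      exact ((hθd t).hasDerivAt.cos).mul_const _
    have h3t : ∀ t, HasDerivAt (fun t' => φ3 t' x)
        (Real.cos (θ t) * deriv θ t) t := by
      intro t
      simp only [hφ3]
      exact (hθd t).hasDerivAt.sin
    have e1t : ∀ t, dt φ1 t x = -Real.sin (θ t) * deriv θ t * Real.cos x :=
      fun t => (h1t t).deriv
    have e2t : ∀ t, dt φ2 t x = -Real.sin (θ t) * deriv θ t * Real.sin x :=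
      fun t => (h2t t).deriv
    have e3t : ∀ t, dt φ3 t x = Real.cos (θ t) * deriv θ t :=
      fun t => (h3t t).deriv
    -- second time derivatives
    have h1tt : dt (dt φ1) t x =
        (-(Real.cos (θ t) * deriv θ t) * deriv θ t + -Real.sin (θ t) * deriv (deriv θ) t) *
          Real.cos x := by
      have : HasDerivAt (fun t' => dt φ1 t' x)
          ((-(Real.cos (θ t) * deriv θ t) * deriv θ t + -Real.sin (θ t) * deriv (deriv θ) t) *
            Real.cos x) t := by
        rw [show (fun t' => dt φ1 t' x) = fun t' => -Real.sin (θ t') * deriv θ t' * Real.cos x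
          from funext e1t]
        exact (((hθd t).hasDerivAt.sin.neg.mul (hθ'd t).hasDerivAt).mul_const _)
      exact this.deriv
    have h2tt : dt (dt φ2) t x =
        (-(Real.cos (θ t) * deriv θ t) * deriv θ t + -Real.sin (θ t) * deriv (deriv θ) t) *
          Real.sin x := by
      have : HasDerivAt (fun t' => dt φ2 t' x)
          ((-(Real.cos (θ t) * deriv θ t) * deriv θ t + -Real.sin (θ t) * deriv (deriv θ) t) *
            Real.sin x) t := by
        rw [show (fun t' => dt φ2 t' x) = fun t' => -Real.sin (θ t') * deriv θ t' * Real.sin x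
          from funext e2t]
        exact (((hθd t).hasDerivAt.sin.neg.mul (hθ'd t).hasDerivAt).mul_const _)
      exact this.deriv
    have h3tt : dt (dt φ3) t x =
        (-Real.sin (θ t) * deriv θ t * deriv θ t + Real.cos (θ t) * deriv (deriv θ) t) := by
      have : HasDerivAt (fun t' => dt φ3 t' x)
          (-Real.sin (θ t) * deriv θ t * deriv θ t + Real.cos (θ t) * deriv (deriv θ) t) t := by
        rw [show (fun t' => dt φ3 t' x) = fun t' => Real.cos (θ t') * deriv θ t' from funext e3t]
        exact ((hθd t).hasDerivAt.cos.mul (hθ'd t).hasDerivAt)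
      exact this.deriv
    -- space derivatives
    have h1x : ∀ x, HasDerivAt (fun x' => φ1 t x') (Real.cos (θ t) * -Real.sin x) x := by
      intro x
      simp only [hφ1]
      exact (Real.hasDerivAt_cos x).const_mul _
    have h2x : ∀ x, HasDerivAt (fun x' => φ2 t x') (Real.cos (θ t) * Real.cos x) x := by
      intro x
      simp only [hφ2]
      exact (Real.hasDerivAt_sin x).const_mul _
    have e1x : ∀ x, dx φ1 t x = Real.cos (θ t) * -Real.sin x := fun x => (h1x x).deriv
    have e2x : ∀ x, dx φ2 t x = Real.cos (θ t) * Real.cos x := fun x => (h2x x).deriv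
    have e3x : ∀ x, dx φ3 t x = 0 := by
      intro x
      have : (fun x' => φ3 t x') = fun _ => Real.sin (θ t) := funext fun x' => hφ3 t x'
      unfold dx
      rw [this, deriv_const]
    have h1xx : dx (dx φ1) t x = Real.cos (θ t) * -Real.cos x := by
      have : HasDerivAt (fun x' => dx φ1 t x') (Real.cos (θ t) * -Real.cos x) x := by
        rw [show (fun x' => dx φ1 t x') = fun x' => Real.cos (θ t) * -Real.sin x' from funext e1x]
        exact ((Real.hasDerivAt_sin x).neg.const_mul _)
      exact this.deriv
    have h2xx : dx (dx φ2) t x = Real.cos (θ t) * -Real.sin x := by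
      have : HasDerivAt (fun x' => dx φ2 t x') (Real.cos (θ t) * -Real.sin x) x := by
        rw [show (fun x' => dx φ2 t x') = fun x' => Real.cos (θ t) * Real.cos x' from funext e2x]
        exact ((Real.hasDerivAt_cos x).const_mul _)
      exact this.deriv
    have h3xx : dx (dx φ3) t x = 0 := by
      show deriv (fun x' => dx φ3 t x') x = 0
      rw [show (fun x' => dx φ3 t x') = fun _ => (0 : ℝ) from funext e3x, deriv_const]
    have key := sin_sq_add_cos_sq (θ t)
    have keyx := sin_sq_add_cos_sq x
    refine ⟨?_, ?_, ?_⟩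
    · simp only [box, h1tt, h1xx, e1t t, e2t t, e3t t, e1x x, e2x x, e3x x, hφ1, hf1, hw]
      linear_combination (Real.cos (θ t)^3 * Real.cos x -
          Real.sin (θ t)^2 * (deriv θ t)^2 * Real.cos (θ t) * Real.cos x) * keyx +
        (Real.cos (θ t) * Real.cos x - Real.cos (θ t) * (deriv θ t)^2 * Real.cos x) * key
    · simp only [box, h2tt, h2xx, e1t t, e2t t, e3t t, e1x x, e2x x, e3x x, hφ2, hf2, hw]
      linear_combination (Real.cos (θ t)^3 * Real.sin x -
          Real.sin (θ t)^2 * (deriv θ t)^2 * Real.cos (θ t) * Real.sin x) * keyx +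
        (Real.cos (θ t) * Real.sin x - Real.cos (θ t) * (deriv θ t)^2 * Real.sin x) * key
    · simp only [box, h3tt, h3xx, e1t t, e2t t, e3t t, e1x x, e2x x, e3x x, hφ3, hf3, hw]
      linear_combination (Real.cos (θ t)^2 * Real.sin (θ t) -
          Real.sin (θ t)^3 * (deriv θ t)^2) * keyx +
        (-(Real.sin (θ t) * (deriv θ t)^2)) * key
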